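/- If A ∈ Rⁿˣⁿ is diagonally stable with positive diagonal P satisfying AᵀP + PA ≤ −εI for some ε > 0, then for any b, c ∈ Rⁿ and any d < 0 with |d| > 2 λ_max(P) ‖b cᵀ‖ / ε, the matrix A − (1/d) b cᵀ satisfies (A − bcᵀ/d)ᵀP + P(A − bcᵀ/d) < 0; in particular A and A − bcᵀ/d share a common diagonal Lyapunov function. -/

import Mathlib

open Matrix

/-- If `AᵀP + PA ≤ -εI` for a positive diagonal `P` and `ε > 0`, then for any
`b, c` and any `d < 0` with `|d| > 2 λ_max(P) ‖bcᵀ‖ / ε`, the matrix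
`A − bcᵀ/d` satisfies `(A − bcᵀ/d)ᵀP + P(A − bcᵀ/d) < 0`; in particular `A` and
`A − bcᵀ/d` share the common diagonal Lyapunov function `P`. -/
theorem rank_one_perturbation_common_diagonal_lyapunov {n : ℕ} [NeZero n]
    (A : Matrix (Fin n) (Fin n) ℝ)
    (p : Fin n → ℝ) (hp : ∀ i, 0 < p i) (ε : ℝ) (hε : 0 < ε)
    (hstab : ∀ v : Fin n → ℝ,
      v ⬝ᵥ ((Aᵀ * Matrix.diagonal p + Matrix.diagonal p * A).mulVec v) ≤
        -ε * ∑ i, (v i) ^ 2)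
    (b c : Fin n → ℝ) (d : ℝ) (hd : d < 0)
    (hdbig : |d| > 2 * (Finset.univ.sup' Finset.univ_nonempty p) *
        ‖Matrix.toEuclideanCLM (𝕜 := ℝ) (Matrix.vecMulVec b c)‖ / ε) :
    ∀ v : Fin n → ℝ, v ≠ 0 →
      v ⬝ᵥ (((A - d⁻¹ • Matrix.vecMulVec b c)ᵀ * Matrix.diagonal p +
        Matrix.diagonal p * (A - d⁻¹ • Matrix.vecMulVec b c)).mulVec v) < 0 := by
  intro v hv
  set B := Matrix.vecMulVec b c with hB
  set P := Matrix.diagonal p with hP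
  set lam := Finset.univ.sup' Finset.univ_nonempty p with hlam
  set nB := ‖Matrix.toEuclideanCLM (𝕜 := ℝ) B‖ with hnB
  have hlam_pos : 0 < lam := by
    obtain ⟨i⟩ := Fin.pos_iff_nonempty.mp (Nat.pos_of_ne_zero (NeZero.ne n))
    exact lt_of_lt_of_le (hp i) (Finset.le_sup' p (Finset.mem_univ i))
  have hnB_nonneg : 0 ≤ nB := norm_nonneg _
  set S := ∑ i, (v i) ^ 2 with hS
  have hS_pos : 0 < S := by
    have : ∃ i, v i ≠ 0 := Function.ne_iff.mp hv
    obtain ⟨i, hi⟩ := this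
    exact Finset.sum_pos' (fun j _ => sq_nonneg _)
      ⟨i, Finset.mem_univ i, by positivity⟩
  set w := B.mulVec v with hw
  -- norm bound on w
  have hwbound : ∑ i, (w i) ^ 2 ≤ nB ^ 2 * S := by
    have h1 : ‖Matrix.toEuclideanCLM (𝕜 := ℝ) B ((WithLp.equiv 2 _).symm v)‖ ≤
        nB * ‖(WithLp.equiv 2 (Fin n → ℝ)).symm v‖ :=
      ContinuousLinearMap.le_opNorm _ _
    change ‖(WithLp.equiv 2 (Fin n → ℝ)).symm (Matrix.toLin' B v)‖ ≤ _ at h1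
    have h2 : ‖(WithLp.equiv 2 (Fin n → ℝ)).symm (Matrix.toLin' B v)‖ =
        Real.sqrt (∑ i, (w i) ^ 2) := by
      rw [EuclideanSpace.norm_eq]
      congr 1
      refine Finset.sum_congr rfl fun i _ => ?_
      simp [hw, Real.norm_eq_abs, sq_abs, Matrix.toLin'_apply]
    have h3 : ‖(WithLp.equiv 2 (Fin n → ℝ)).symm v‖ = Real.sqrt S := by
      rw [EuclideanSpace.norm_eq]
      congr 1
      refine Finset.sum_congr rfl fun i _ => ?_
      simp [Real.norm_eq_abs, sq_abs]
    rw [h2, h3] at h1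
    have h4 : Real.sqrt (∑ i, (w i) ^ 2) ^ 2 ≤ (nB * Real.sqrt S) ^ 2 := by
      apply sq_le_sq' _ h1
      have : 0 ≤ Real.sqrt (∑ i, (w i) ^ 2) := Real.sqrt_nonneg _
      nlinarith [Real.sqrt_nonneg (∑ i, (w i) ^ 2)]
    rw [Real.sq_sqrt (Finset.sum_nonneg fun i _ => sq_nonneg _)] at h4
    calc ∑ i, (w i) ^ 2 ≤ (nB * Real.sqrt S) ^ 2 := h4
      _ = nB ^ 2 * S := by
          rw [mul_pow, Real.sq_sqrt hS_pos.le]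
  -- cross term bound
  set cross := ∑ i, w i * (p i * v i) with hcross
  have hcross_bound : |cross| ≤ nB * lam * S := by
    have hcs := Finset.sum_mul_sq_le_sq_mul_sq Finset.univ w (fun i => p i * v i)
    have hpv : ∑ i, (p i * v i) ^ 2 ≤ lam ^ 2 * S := by
      rw [Finset.mul_sum]
      refine Finset.sum_le_sum fun i _ => ?_
      have hpi : p i ≤ lam := Finset.le_sup' p (Finset.mem_univ i)
      rw [mul_pow]
      exact mul_le_mul_of_nonneg_right (pow_le_pow_left₀ (hp i).le hpi 2) (sq_nonneg _)
    have h5 : cross ^ 2 ≤ (nB * lam * S) ^ 2 := by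
      calc cross ^ 2 ≤ (∑ i, (w i) ^ 2) * (∑ i, (p i * v i) ^ 2) := hcs
        _ ≤ (nB ^ 2 * S) * (lam ^ 2 * S) := by
            apply mul_le_mul hwbound hpv (Finset.sum_nonneg fun i _ => sq_nonneg _)
            positivity
        _ = (nB * lam * S) ^ 2 := by ring
    have hpos : 0 ≤ nB * lam * S := by positivity
    have h6 : |cross| ^ 2 ≤ (nB * lam * S) ^ 2 := by rw [sq_abs]; exact h5
    nlinarith [abs_nonneg cross]
  -- expand quadratic form
  have hPw : P.mulVec v = fun i => p i * v i := by
    ext i; simp [hP, Matrix.mulVec_diagonal]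
  have hexpand : v ⬝ᵥ (((A - d⁻¹ • B)ᵀ * P + P * (A - d⁻¹ • B)).mulVec v) =
      v ⬝ᵥ ((Aᵀ * P + P * A).mulVec v) - d⁻¹ * (2 * cross) := by
    have e1 : v ⬝ᵥ ((Bᵀ * P).mulVec v) = cross := by
      rw [← Matrix.mulVec_mulVec, Matrix.dotProduct_mulVec, Matrix.vecMul_transpose, hPw]
      simp [hcross, dotProduct, hw]
    have e2 : v ⬝ᵥ ((P * B).mulVec v) = cross := by
      rw [← Matrix.mulVec_mulVec]
      have hPww : P.mulVec w = fun i => p i * w i := by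
        ext i; simp [hP, Matrix.mulVec_diagonal]
      rw [hPww]
      simp only [hcross, dotProduct]
      exact Finset.sum_congr rfl fun i _ => by ring
    have expand_mat : (A - d⁻¹ • B)ᵀ * P + P * (A - d⁻¹ • B) =
        (Aᵀ * P + P * A) - d⁻¹ • (Bᵀ * P + P * B) := by
      rw [Matrix.transpose_sub, Matrix.transpose_smul]
      rw [Matrix.sub_mul, Matrix.mul_sub]
      rw [Matrix.smul_mul, Matrix.mul_smul, smul_add]
      abel
    rw [expand_mat]
    simp only [Matrix.sub_mulVec, Matrix.add_mulVec, Matrix.smul_mulVec,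
      dotProduct_sub, dotProduct_add, dotProduct_smul, smul_eq_mul, e1, e2]
    ring
  rw [hexpand]
  have hA := hstab v
  -- from hdbig: 2 * lam * nB < |d| * ε, hence 2 * lam * nB / |d| < ε
  have habs : |d| = -d := abs_of_neg hd
  have hdpos : 0 < -d := by linarith
  have hdbig' : 2 * lam * nB / ε < -d := by rw [habs] at hdbig; linarith
  have hkey : 2 * lam * nB < (-d) * ε := (div_lt_iff₀ hε).mp hdbig'

  have hcross2 : -(d⁻¹) * (2 * cross) ≤ (-d)⁻¹ * (2 * (nB * lam * S)) := by
    have hinv : -(d⁻¹) = (-d)⁻¹ := by rw [inv_neg]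
    rw [hinv]
    apply mul_le_mul_of_nonneg_left _ (by positivity)
    have := abs_le.mp hcross_bound
    linarith [this.2]
  have : v ⬝ᵥ ((Aᵀ * P + P * A).mulVec v) - d⁻¹ * (2 * cross) ≤
      -ε * S + (-d)⁻¹ * (2 * (nB * lam * S)) := by
    have : -(d⁻¹ * (2 * cross)) = -(d⁻¹) * (2 * cross) := by ring
    rw [sub_eq_add_neg, this]
    exact add_le_add hA hcross2
  refine lt_of_le_of_lt this ?_
  have hfinal : (-d)⁻¹ * (2 * (nB * lam * S)) < ε * S := by
    rw [inv_mul_lt_iff₀ hdpos]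
    calc 2 * (nB * lam * S) = (2 * lam * nB) * S := by ring
      _ < ((-d) * ε) * S := by
          exact mul_lt_mul_of_pos_right hkey hS_pos
      _ = -d * (ε * S) := by ring
  linarith
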